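/- Let ε > 0, a > 0, c > 0 and n ≥ 1 a natural number. Define ψ₊ : [0,a] → ℝ by ψ₊(x) = sinh((nπ/c)(a−x)) and ψ₋ : [−a,0] → ℝ by ψ₋(x) = sinh((nπ/c)(a+x)). Then: (1) −ε·(ψ₊''(x) − (nπ/c)²·ψ₊(x)) = 0 for all x ∈ (0,a); (2) ε·(ψ₋''(x) − (nπ/c)²·ψ₋(x)) = 0 for all x ∈ (−a,0); (3) ψ₊(a) = 0 and ψ₋(−a) = 0; (4) ψ₊(0) = ψ₋(0); (5) ε·ψ₊'(0) = −ε·ψ₋'(0). -/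

import Mathlib

open Real

lemma aux_deriv_sub (k a : ℝ) :
    deriv (fun x : ℝ => Real.sinh (k * (a - x))) = fun x => -k * Real.cosh (k * (a - x)) := by
  funext x
  have h1 : HasDerivAt (fun x : ℝ => k * (a - x)) (-k) x := by
    simpa using (((hasDerivAt_id x).const_sub a).const_mul k)
  have h2 := (Real.hasDerivAt_sinh (k * (a - x))).comp x h1
  simpa [mul_comm, Function.comp_def] using h2.deriv

lemma aux_deriv_add (k a : ℝ) :
    deriv (fun x : ℝ => Real.sinh (k * (a + x))) = fun x => k * Real.cosh (k * (a + x)) := by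
  funext x
  have h1 : HasDerivAt (fun x : ℝ => k * (a + x)) k x := by
    simpa using (((hasDerivAt_id x).const_add a).const_mul k)
  have h2 := (Real.hasDerivAt_sinh (k * (a + x))).comp x h1
  simpa [mul_comm, Function.comp_def] using h2.deriv

lemma aux_deriv_cosh_sub (k a : ℝ) :
    deriv (fun x : ℝ => -k * Real.cosh (k * (a - x)))
      = fun x => k * k * Real.sinh (k * (a - x)) := by
  funext x
  have h1 : HasDerivAt (fun x : ℝ => k * (a - x)) (-k) x := by
    simpa using (((hasDerivAt_id x).const_sub a).const_mul k)
  have h2 := (((Real.hasDerivAt_cosh (k * (a - x))).comp x h1).const_mul (-k))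
  have := h2.deriv
  simpa [mul_comm, mul_left_comm, mul_assoc, neg_mul, mul_neg] using this

lemma aux_deriv_cosh_add (k a : ℝ) :
    deriv (fun x : ℝ => k * Real.cosh (k * (a + x)))
      = fun x => k * k * Real.sinh (k * (a + x)) := by
  funext x
  have h1 : HasDerivAt (fun x : ℝ => k * (a + x)) k x := by
    simpa using (((hasDerivAt_id x).const_add a).const_mul k)
  have h2 := (((Real.hasDerivAt_cosh (k * (a + x))).comp x h1).const_mul k)
  have := h2.deriv
  simpa [mul_comm, mul_left_comm, mul_assoc] using this

/-- On the symmetric rectangle with critical contrast ε₊ = ε₋ = ε, the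
pair ψ₊(x) = sinh((nπ/c)(a−x)), ψ₋(x) = sinh((nπ/c)(a+x)) is a transverse profile of
an eigenfunction of the indefinite Laplacian with eigenvalue λ = 0: it satisfies the
two ODEs, Dirichlet conditions at ±a, continuity at 0 and the sign-flipped flux
condition at 0. -/
theorem stmt_9 (ε a c : ℝ) (hε : 0 < ε) (ha : 0 < a) (hc : 0 < c)
    (n : ℕ) (hn : 1 ≤ n)
    (ψp ψm : ℝ → ℝ)
    (hψp : ψp = fun x : ℝ => Real.sinh (((n : ℝ) * π / c) * (a - x)))
    (hψm : ψm = fun x : ℝ => Real.sinh (((n : ℝ) * π / c) * (a + x))) :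
    (∀ x ∈ Set.Ioo (0 : ℝ) a,
        -(ε * (deriv (deriv ψp) x - ((n : ℝ) * π / c) ^ 2 * ψp x)) = 0) ∧
    (∀ x ∈ Set.Ioo (-a) (0 : ℝ),
        ε * (deriv (deriv ψm) x - ((n : ℝ) * π / c) ^ 2 * ψm x) = 0) ∧
    (ψp a = 0 ∧ ψm (-a) = 0) ∧
    (ψp 0 = ψm 0) ∧
    (ε * deriv ψp 0 = -(ε * deriv ψm 0)) := by
  set k : ℝ := (n : ℝ) * π / c with hk
  subst hψp hψm
  have dp : deriv (fun x : ℝ => Real.sinh (k * (a - x))) = fun x => -k * Real.cosh (k * (a - x)) :=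
    aux_deriv_sub k a
  have dm : deriv (fun x : ℝ => Real.sinh (k * (a + x))) = fun x => k * Real.cosh (k * (a + x)) :=
    aux_deriv_add k a
  refine ⟨?_, ?_, ⟨?_, ?_⟩, ?_, ?_⟩
  · intro x _
    rw [dp, aux_deriv_cosh_sub]
    ring
  · intro x _
    rw [dm, aux_deriv_cosh_add]
    ring
  · simp
  · simp
  · simp
  · rw [dp, dm]
    simp [mul_comm, mul_left_comm, mul_assoc]
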